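/- Say a sequence of paths (p_k) converges to a path p = (i, s) if for every m there is K such that for all k ≥ K the path p_k has first coordinate i and its Boolean sequence agrees with s on 0, 1, …, m. If p is the limit of a strictly increasing sequence of paths, then X_∞(p) − X^L_∞(p) = Φ_∞(p)/2, where X^L_∞(p) := sup{X_∞(q) : q a path, q < p}. Dually, if q is the limit of a strictly decreasing sequence of paths, then X^R_∞(q) − X_∞(q) = Φ_∞(q)/2, where X^R_∞(q) := inf{X_∞(r) : r a path, r > q}. -/

import Mathlib

noncomputable section
open Filter Topology Classical

/-- Lexicographic strict order on infinite paths. -/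
def PathLt {N : ℕ} (p q : Fin N × (ℕ → Bool)) : Prop :=
  p.1 < q.1 ∨ (p.1 = q.1 ∧ ∃ n : ℕ, (∀ k < n, p.2 k = q.2 k) ∧ p.2 n = false ∧ q.2 n = true)

/-- Lexicographic strict order on positive edges (compared within a sphere `S(n)`). -/
def EdgeLt {N : ℕ} (e f : Fin N × List Bool) : Prop :=
  e.1 < f.1 ∨ (e.1 = f.1 ∧ List.Lex (· < ·) e.2 f.2)

/-- The word `[s 0, …, s (m-1)]` of length `m`. -/
def word (s : ℕ → Bool) (m : ℕ) : List Bool := List.ofFn (fun k : Fin m => s k.val)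

/-- `Y (i, v)` for an edge of `S (m+1)`: `Y_n(e) = Φ(e)/2 + ∑_{f ∈ S(n), f < e} Φ(f)`. -/
def Y {N : ℕ} (Φ : Fin N → List Bool → ℝ) (m : ℕ) (i : Fin N) (v : Fin m → Bool) : ℝ :=
  Φ i (List.ofFn v) / 2 +
    ∑ x : Fin N × (Fin m → Bool),
      if EdgeLt (x.1, List.ofFn x.2) (i, List.ofFn v) then Φ x.1 (List.ofFn x.2) else 0

/-- `X_n(p) = Y_n(p^n)`; here `m = n - 1` is the word length of the `n`-th edge. -/
def X {N : ℕ} (Φ : Fin N → List Bool → ℝ) (m : ℕ) (p : Fin N × (ℕ → Bool)) : ℝ :=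
  Y Φ m p.1 (fun k => p.2 k.val)

/-- `X_∞(p) = lim_n X_n(p)` (the limit exists for every path). -/
def Xinf {N : ℕ} (Φ : Fin N → List Bool → ℝ) (p : Fin N × (ℕ → Bool)) : ℝ :=
  limUnder atTop (fun m => X Φ m p)

/-- `Φ_∞(p) = lim_n Φ(p^n)` (the limit exists since the sequence is positive
and decreasing). -/
def PhiInf {N : ℕ} (Φ : Fin N → List Bool → ℝ) (p : Fin N × (ℕ → Bool)) : ℝ :=
  limUnder atTop (fun m => Φ p.1 (word p.2 m))

/-- `X^L_∞(p) = sup {X_∞(q) : q < p}`. -/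
def XL {N : ℕ} (Φ : Fin N → List Bool → ℝ) (p : Fin N × (ℕ → Bool)) : ℝ :=
  sSup (Xinf Φ '' {q | PathLt q p})

/-- `X^R_∞(p) = inf {X_∞(q) : q > p}`. -/
def XR {N : ℕ} (Φ : Fin N → List Bool → ℝ) (p : Fin N × (ℕ → Bool)) : ℝ :=
  sInf (Xinf Φ '' {q | PathLt p q})

/-- A sequence of paths converges to `p = (i, s)` if for every `m` the paths eventually
have first coordinate `i` and Boolean sequence agreeing with `s` on `0, 1, …, m`. -/
def PathTendsto {N : ℕ} (pk : ℕ → Fin N × (ℕ → Bool)) (p : Fin N × (ℕ → Bool)) : Prop :=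
  ∀ m : ℕ, ∃ K : ℕ, ∀ k ≥ K, (pk k).1 = p.1 ∧ ∀ l ≤ m, (pk k).2 l = p.2 l

-- lex lemmas
theorem lexTrans : ∀ {a b c : List Bool}, List.Lex (· < ·) a b → List.Lex (· < ·) b c →
    List.Lex (· < ·) a c
  | _, _, _, .nil, .rel _ => .nil
  | _, _, _, .nil, .cons _ => .nil
  | _, _, _, .rel h1, .rel h2 => .rel (lt_trans h1 h2)
  | _, _, _, .rel h1, .cons _ => .rel h1
  | _, _, _, .cons _, .rel h2 => .rel h2
  | _, _, _, .cons h1, .cons h2 => .cons (lexTrans h1 h2)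

theorem lexIrrefl (l : List Bool) : ¬ List.Lex (· < ·) l l := fun h =>
  (List.Lex.asymm (· < ·)).asymm l l h h

theorem lexConsIff {c d : Bool} {l1 l2 : List Bool} :
    List.Lex (· < ·) (c :: l1) (d :: l2) ↔ c < d ∨ (c = d ∧ List.Lex (· < ·) l1 l2) := by
  constructor
  · intro h
    cases h with
    | cons h => exact Or.inr ⟨rfl, h⟩
    | rel h => exact Or.inl h
  · rintro (h | ⟨rfl, h⟩)
    · exact .rel h
    · exact .cons h

theorem lexAppend : ∀ {u v : List Bool}, u.length = v.length → ∀ {a b : Bool},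
    (List.Lex (· < ·) (u ++ [a]) (v ++ [b]) ↔
      List.Lex (· < ·) u v ∨ (u = v ∧ a < b)) := by
  intro u
  induction u with
  | nil =>
    intro v hv a b
    cases v with
    | nil => simp [List.lex_singleton_iff, List.not_lex_nil]
    | cons d v' => simp at hv
  | cons c u' ih =>
    intro v hv a b
    cases v with
    | nil => simp at hv
    | cons d v' =>
      simp only [List.length_cons, Nat.succ.injEq] at hv
      rw [List.cons_append, List.cons_append, lexConsIff, lexConsIff, ih hv]
      simp only [List.cons.injEq]
      tauto

theorem edgeLtTrans {N : ℕ} {a b c : Fin N × List Bool} (h1 : EdgeLt a b) (h2 : EdgeLt b c) :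
    EdgeLt a c := by
  rcases h1 with h1 | ⟨e1, h1⟩ <;> rcases h2 with h2 | ⟨e2, h2⟩
  · exact Or.inl (lt_trans h1 h2)
  · exact Or.inl (e2 ▸ h1)
  · exact Or.inl (e1 ▸ h2)
  · exact Or.inr ⟨e1.trans e2, lexTrans h1 h2⟩

theorem edgeLtIrrefl {N : ℕ} (e : Fin N × List Bool) : ¬ EdgeLt e e := by
  rintro (h | ⟨-, h⟩)
  · exact lt_irrefl _ h
  · exact lexIrrefl _ h

theorem ofFn_snoc' {m : ℕ} (v : Fin m → Bool) (b : Bool) :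
    List.ofFn (Fin.snoc v b : Fin (m+1) → Bool) = List.ofFn v ++ [b] := by
  rw [List.ofFn_succ']
  simp [Fin.snoc_castSucc, Fin.snoc_last, List.concat_eq_append]

theorem pv_succ (s : ℕ → Bool) (m : ℕ) :
    (fun k : Fin (m+1) => s k.val) = Fin.snoc (fun k : Fin m => s k.val) (s m) := by
  funext k
  induction k using Fin.lastCases with
  | last => simp
  | cast i => simp

theorem word_succ (s : ℕ → Bool) (m : ℕ) : word s (m+1) = word s m ++ [s m] := by
  unfold word
  rw [pv_succ, ofFn_snoc']

theorem sum_split {N : ℕ} (m : ℕ) (F : Fin N × (Fin (m+1) → Bool) → ℝ) :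
    ∑ x : Fin N × (Fin (m+1) → Bool), F x
      = ∑ y : Fin N × (Fin m → Bool),
          (F (y.1, Fin.snoc y.2 false) + F (y.1, Fin.snoc y.2 true)) := by
  let e : (Fin N × (Fin m → Bool)) × Bool ≃ Fin N × (Fin (m+1) → Bool) :=
  { toFun := fun y => (y.1.1, Fin.snoc y.1.2 y.2)
    invFun := fun x => ((x.1, Fin.init x.2), x.2 (Fin.last m))
    left_inv := by rintro ⟨⟨j, w⟩, b⟩; simp
    right_inv := by rintro ⟨j, w⟩; simp }
  rw [← Fintype.sum_equiv e (fun y => F (e y)) F (fun y => rfl), Fintype.sum_prod_type]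
  refine Finset.sum_congr rfl fun y _ => ?_
  rw [Fintype.sum_bool]
  exact add_comm _ _

/-- Sum of `Φ` over edges strictly before `(i, v)` in `S (m+1)`. -/
def Ls {N : ℕ} (Φ : Fin N → List Bool → ℝ) (m : ℕ) (i : Fin N) (v : Fin m → Bool) : ℝ :=
  ∑ x : Fin N × (Fin m → Bool),
    if EdgeLt (x.1, List.ofFn x.2) (i, List.ofFn v) then Φ x.1 (List.ofFn x.2) else 0

theorem edgeLt_append {N : ℕ} {j i : Fin N} {u v : List Bool}
    (h : u.length = v.length) {a b : Bool} :
    EdgeLt (j, u ++ [a]) (i, v ++ [b]) ↔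
      EdgeLt (j, u) (i, v) ∨ (j = i ∧ u = v ∧ a < b) := by
  unfold EdgeLt
  rw [lexAppend h]
  tauto

theorem Ls_succ {N : ℕ} (Φ : Fin N → List Bool → ℝ)
    (hharm : ∀ (i : Fin N) (w : List Bool), Φ i w = Φ i (w ++ [false]) + Φ i (w ++ [true]))
    (m : ℕ) (i : Fin N) (v : Fin m → Bool) (b : Bool) :
    Ls Φ (m+1) i (Fin.snoc v b) = Ls Φ m i v
      + (if b = true then Φ i (List.ofFn v ++ [false]) else 0) := by
  unfold Ls
  rw [sum_split]
  have len : ∀ w : Fin m → Bool, (List.ofFn w).length = (List.ofFn v).length := by simp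
  have key : ∀ y : Fin N × (Fin m → Bool),
      ((if EdgeLt (y.1, List.ofFn (Fin.snoc y.2 false : Fin (m+1) → Bool))
          (i, List.ofFn (Fin.snoc v b : Fin (m+1) → Bool)) then
            Φ y.1 (List.ofFn (Fin.snoc y.2 false : Fin (m+1) → Bool)) else 0)
        + (if EdgeLt (y.1, List.ofFn (Fin.snoc y.2 true : Fin (m+1) → Bool))
          (i, List.ofFn (Fin.snoc v b : Fin (m+1) → Bool)) then
            Φ y.1 (List.ofFn (Fin.snoc y.2 true : Fin (m+1) → Bool)) else 0))
      = (if EdgeLt (y.1, List.ofFn y.2) (i, List.ofFn v) then Φ y.1 (List.ofFn y.2) else 0)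
        + (if y = (i, v) ∧ b = true then Φ i (List.ofFn v ++ [false]) else 0) := by
    rintro ⟨j, w⟩
    simp only [ofFn_snoc']
    rw [edgeLt_append (len w), edgeLt_append (len w)]
    by_cases hC : EdgeLt (j, List.ofFn w) (i, List.ofFn v)
    · have hne : ¬ ((j, w) = (i, v) ∧ b = true) := by
        rintro ⟨h, -⟩
        injection h with h1 h2
        subst h1; subst h2
        exact edgeLtIrrefl _ hC
      rw [if_pos (Or.inl hC), if_pos (Or.inl hC), if_pos hC, if_neg hne, add_zero, ← hharm]
    · by_cases heq : (j, w) = (i, v)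
      · injection heq with h1 h2
        subst h1; subst h2
        rw [if_neg hC]
        cases b with
        | false =>
          have h1 : ∀ c : Bool, ¬ (EdgeLt (j, List.ofFn w) (j, List.ofFn w)
              ∨ (j = j ∧ List.ofFn w = List.ofFn w ∧ c < false)) := by
            rintro c (h | ⟨-, -, h⟩)
            · exact hC h
            · simp [Bool.lt_iff] at h
          rw [if_neg (h1 false), if_neg (h1 true)]
          simp
        | true =>
          have h1 : ¬ (EdgeLt (j, List.ofFn w) (j, List.ofFn w)
              ∨ (j = j ∧ List.ofFn w = List.ofFn w ∧ true < true)) := by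
            rintro (h | ⟨-, -, h⟩)
            · exact hC h
            · simp [Bool.lt_iff] at h
          rw [if_pos (Or.inr ⟨rfl, rfl, by simp [Bool.lt_iff]⟩), if_neg h1,
            if_pos ⟨rfl, rfl⟩]
          try simp
          try ring
      · have h1 : ∀ c c' : Bool, ¬ (EdgeLt (j, List.ofFn w) (i, List.ofFn v)
            ∨ (j = i ∧ List.ofFn w = List.ofFn v ∧ c < c')) := by
          rintro c c' (h | ⟨h1, h2, -⟩)
          · exact hC h
          · exact heq (by rw [List.ofFn_inj] at h2; rw [h1, h2])
        rw [if_neg (h1 false b), if_neg (h1 true b), if_neg hC,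
          if_neg (fun h => heq h.1)]
  rw [Finset.sum_congr rfl fun y _ => key y, Finset.sum_add_distrib]
  congr 1
  by_cases hb : b = true
  · simp only [hb, and_true]
    rw [Finset.sum_ite_eq' Finset.univ (i, v) (fun _ => Φ i (List.ofFn v ++ [false]))]
    simp
  · simp [hb]

def Rs {N : ℕ} (Φ : Fin N → List Bool → ℝ) (m : ℕ) (i : Fin N) (v : Fin m → Bool) : ℝ :=
  Ls Φ m i v + Φ i (List.ofFn v)

theorem Rs_eq {N : ℕ} (Φ : Fin N → List Bool → ℝ) (m : ℕ) (i : Fin N) (v : Fin m → Bool) :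
    Rs Φ m i v = ∑ x : Fin N × (Fin m → Bool),
      if EdgeLt (x.1, List.ofFn x.2) (i, List.ofFn v) ∨ x = (i, v)
        then Φ x.1 (List.ofFn x.2) else 0 := by
  have key : ∀ x : Fin N × (Fin m → Bool),
      (if EdgeLt (x.1, List.ofFn x.2) (i, List.ofFn v) ∨ x = (i, v)
        then Φ x.1 (List.ofFn x.2) else 0)
      = (if EdgeLt (x.1, List.ofFn x.2) (i, List.ofFn v) then Φ x.1 (List.ofFn x.2) else 0)
        + (if x = (i, v) then Φ x.1 (List.ofFn x.2) else 0) := by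
    intro x
    by_cases hx : x = (i, v)
    · subst hx
      rw [if_pos (Or.inr rfl), if_neg (edgeLtIrrefl _), if_pos rfl, zero_add]
    · by_cases hc : EdgeLt (x.1, List.ofFn x.2) (i, List.ofFn v)
      · rw [if_pos (Or.inl hc), if_pos hc, if_neg hx, add_zero]
      · rw [if_neg (by tauto), if_neg hc, if_neg hx, add_zero]
  rw [Finset.sum_congr rfl fun x _ => key x, Finset.sum_add_distrib,
    Finset.sum_ite_eq' Finset.univ (i, v) (fun x => Φ x.1 (List.ofFn x.2))]
  unfold Rs Ls
  simp only [Finset.mem_univ, if_true]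

theorem Rs_le_Ls {N : ℕ} (Φ : Fin N → List Bool → ℝ)
    (hpos : ∀ (i : Fin N) (w : List Bool), 0 < Φ i w) {m : ℕ} {j i : Fin N}
    {w v : Fin m → Bool} (h : EdgeLt (j, List.ofFn w) (i, List.ofFn v)) :
    Rs Φ m j w ≤ Ls Φ m i v := by
  rw [Rs_eq]
  unfold Ls
  refine Finset.sum_le_sum fun x _ => ?_
  by_cases hx : EdgeLt (x.1, List.ofFn x.2) (j, List.ofFn w) ∨ x = (j, w)
  · have h2 : EdgeLt (x.1, List.ofFn x.2) (i, List.ofFn v) := by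
      rcases hx with hx | rfl
      · exact edgeLtTrans hx h
      · exact h
    rw [if_pos hx, if_pos h2]
  · rw [if_neg hx]
    split_ifs with h2
    · exact (hpos _ _).le
    · exact le_refl 0

def pv {N : ℕ} (p : Fin N × (ℕ → Bool)) (m : ℕ) : Fin m → Bool := fun k => p.2 k.val

def Lp {N : ℕ} (Φ : Fin N → List Bool → ℝ) (p : Fin N × (ℕ → Bool)) (m : ℕ) : ℝ :=
  Ls Φ m p.1 (pv p m)

def Rp {N : ℕ} (Φ : Fin N → List Bool → ℝ) (p : Fin N × (ℕ → Bool)) (m : ℕ) : ℝ :=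
  Lp Φ p m + Φ p.1 (word p.2 m)

theorem X_eq {N : ℕ} (Φ : Fin N → List Bool → ℝ) (m : ℕ) (p : Fin N × (ℕ → Bool)) :
    X Φ m p = (Lp Φ p m + Rp Φ p m) / 2 := by
  unfold X Y Rp Lp Ls pv word
  ring

theorem Lp_succ {N : ℕ} (Φ : Fin N → List Bool → ℝ)
    (hharm : ∀ (i : Fin N) (w : List Bool), Φ i w = Φ i (w ++ [false]) + Φ i (w ++ [true]))
    (p : Fin N × (ℕ → Bool)) (m : ℕ) :
    Lp Φ p (m+1) = Lp Φ p m
      + (if p.2 m = true then Φ p.1 (word p.2 m ++ [false]) else 0) := by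
  unfold Lp
  rw [show pv p (m+1) = Fin.snoc (pv p m) (p.2 m) from pv_succ p.2 m, Ls_succ Φ hharm]
  rfl

theorem Lp_mono {N : ℕ} (Φ : Fin N → List Bool → ℝ)
    (hpos : ∀ (i : Fin N) (w : List Bool), 0 < Φ i w)
    (hharm : ∀ (i : Fin N) (w : List Bool), Φ i w = Φ i (w ++ [false]) + Φ i (w ++ [true]))
    (p : Fin N × (ℕ → Bool)) : Monotone (Lp Φ p) := by
  refine monotone_nat_of_le_succ fun m => ?_
  rw [Lp_succ Φ hharm]
  have : (0:ℝ) ≤ if p.2 m = true then Φ p.1 (word p.2 m ++ [false]) else 0 := by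
    split_ifs
    · exact (hpos _ _).le
    · exact le_refl 0
  linarith

theorem Rp_anti {N : ℕ} (Φ : Fin N → List Bool → ℝ)
    (hpos : ∀ (i : Fin N) (w : List Bool), 0 < Φ i w)
    (hharm : ∀ (i : Fin N) (w : List Bool), Φ i w = Φ i (w ++ [false]) + Φ i (w ++ [true]))
    (p : Fin N × (ℕ → Bool)) : Antitone (Rp Φ p) := by
  refine antitone_nat_of_succ_le fun m => ?_
  unfold Rp
  rw [Lp_succ Φ hharm, word_succ, hharm p.1 (word p.2 m)]
  cases hb : p.2 m with
  | false =>
    rw [if_neg Bool.false_ne_true]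
    have := hpos p.1 (word p.2 m ++ [true])
    linarith
  | true =>
    rw [if_pos rfl]
    linarith

theorem Lp_le_Rp {N : ℕ} (Φ : Fin N → List Bool → ℝ)
    (hpos : ∀ (i : Fin N) (w : List Bool), 0 < Φ i w)
    (p : Fin N × (ℕ → Bool)) (m : ℕ) : Lp Φ p m ≤ Rp Φ p m := by
  have := hpos p.1 (word p.2 m)
  unfold Rp
  linarith

theorem Lp_le_Rp' {N : ℕ} (Φ : Fin N → List Bool → ℝ)
    (hpos : ∀ (i : Fin N) (w : List Bool), 0 < Φ i w)
    (hharm : ∀ (i : Fin N) (w : List Bool), Φ i w = Φ i (w ++ [false]) + Φ i (w ++ [true]))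
    (p : Fin N × (ℕ → Bool)) (m n : ℕ) : Lp Φ p m ≤ Rp Φ p n := by
  rcases le_total m n with h | h
  · exact (Lp_mono Φ hpos hharm p h).trans (Lp_le_Rp Φ hpos p n)
  · exact (Lp_le_Rp Φ hpos p m).trans (Rp_anti Φ hpos hharm p h)

def SL {N : ℕ} (Φ : Fin N → List Bool → ℝ) (p : Fin N × (ℕ → Bool)) : ℝ := ⨆ m, Lp Φ p m
def IR {N : ℕ} (Φ : Fin N → List Bool → ℝ) (p : Fin N × (ℕ → Bool)) : ℝ := ⨅ m, Rp Φ p m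

section conv
variable {N : ℕ} (Φ : Fin N → List Bool → ℝ)
  (hpos : ∀ (i : Fin N) (w : List Bool), 0 < Φ i w)
  (hharm : ∀ (i : Fin N) (w : List Bool), Φ i w = Φ i (w ++ [false]) + Φ i (w ++ [true]))
  (p : Fin N × (ℕ → Bool))
include hpos hharm

theorem Lp_bdd : BddAbove (Set.range (Lp Φ p)) := by
  refine ⟨Rp Φ p 0, ?_⟩
  rintro _ ⟨m, rfl⟩
  exact Lp_le_Rp' Φ hpos hharm p m 0

theorem Rp_bdd : BddBelow (Set.range (Rp Φ p)) := by
  refine ⟨Lp Φ p 0, ?_⟩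
  rintro _ ⟨m, rfl⟩
  exact Lp_le_Rp' Φ hpos hharm p 0 m

theorem tendsto_Lp : Tendsto (Lp Φ p) atTop (𝓝 (SL Φ p)) :=
  tendsto_atTop_ciSup (Lp_mono Φ hpos hharm p) (Lp_bdd Φ hpos hharm p)

theorem tendsto_Rp : Tendsto (Rp Φ p) atTop (𝓝 (IR Φ p)) :=
  tendsto_atTop_ciInf (Rp_anti Φ hpos hharm p) (Rp_bdd Φ hpos hharm p)

theorem Lp_le_SL (m : ℕ) : Lp Φ p m ≤ SL Φ p :=
  le_ciSup (Lp_bdd Φ hpos hharm p) m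

theorem IR_le_Rp (m : ℕ) : IR Φ p ≤ Rp Φ p m :=
  ciInf_le (Rp_bdd Φ hpos hharm p) m

theorem SL_le_IR : SL Φ p ≤ IR Φ p :=
  ciSup_le fun m => le_ciInf fun n => Lp_le_Rp' Φ hpos hharm p m n

theorem Xinf_eq : Xinf Φ p = (SL Φ p + IR Φ p) / 2 := by
  have h : Tendsto (fun m => X Φ m p) atTop (𝓝 ((SL Φ p + IR Φ p) / 2)) := by
    have := ((tendsto_Lp Φ hpos hharm p).add (tendsto_Rp Φ hpos hharm p)).div_const 2
    exact this.congr fun m => (X_eq Φ m p).symm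
  exact h.limUnder_eq

theorem PhiInf_eq : PhiInf Φ p = IR Φ p - SL Φ p := by
  have h : Tendsto (fun m => Φ p.1 (word p.2 m)) atTop (𝓝 (IR Φ p - SL Φ p)) := by
    have := (tendsto_Rp Φ hpos hharm p).sub (tendsto_Lp Φ hpos hharm p)
    refine this.congr fun m => ?_
    unfold Rp
    ring
  exact h.limUnder_eq

theorem Lp_le_Xinf (m : ℕ) : Lp Φ p m ≤ Xinf Φ p := by
  rw [Xinf_eq Φ hpos hharm p]
  have h1 := Lp_le_SL Φ hpos hharm p m
  have h2 := SL_le_IR Φ hpos hharm p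
  linarith

theorem Xinf_le_Rp (m : ℕ) : Xinf Φ p ≤ Rp Φ p m := by
  rw [Xinf_eq Φ hpos hharm p]
  have h1 := IR_le_Rp Φ hpos hharm p m
  have h2 := SL_le_IR Φ hpos hharm p
  linarith

end conv

theorem eventual_edge {N : ℕ} {q p : Fin N × (ℕ → Bool)} (h : PathLt q p) :
    ∃ M : ℕ, ∀ m, M ≤ m →
      EdgeLt (q.1, word q.2 m) (p.1, word p.2 m) := by
  rcases h with h | ⟨heq, n, hag, hf, ht⟩
  · exact ⟨0, fun m _ => Or.inl h⟩
  · refine ⟨n + 1, fun m hm => ?_⟩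
    refine Or.inr ⟨heq, ?_⟩
    induction m, hm using Nat.le_induction with
    | base =>
      rw [word_succ, word_succ, hf, ht,
        show word q.2 n = word p.2 n by
          unfold word; exact congrArg _ (funext fun k => hag k.val k.isLt)]
      exact (lexAppend (by rfl)).mpr (Or.inr ⟨rfl, by simp [Bool.lt_iff]⟩)
    | succ m hm ih =>
      rw [word_succ, word_succ]
      exact (lexAppend (by simp [word])).mpr (Or.inl ih)

theorem pathLtTrans {N : ℕ} {a b c : Fin N × (ℕ → Bool)}
    (h1 : PathLt a b) (h2 : PathLt b c) : PathLt a c := by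
  rcases h1 with h1 | ⟨e1, n1, ag1, f1, t1⟩ <;> rcases h2 with h2 | ⟨e2, n2, ag2, f2, t2⟩
  · exact Or.inl (lt_trans h1 h2)
  · exact Or.inl (e2 ▸ h1)
  · exact Or.inl (e1 ▸ h2)
  · refine Or.inr ⟨e1.trans e2, ?_⟩
    rcases lt_trichotomy n1 n2 with h | h | h
    · exact ⟨n1, fun k hk => (ag1 k hk).trans (ag2 k (hk.trans h)), f1,
        (ag2 n1 h).symm.trans t1⟩
    · subst h
      rw [t1] at f2
      exact absurd f2 (by simp)
    · exact ⟨n2, fun k hk => (ag1 k (hk.trans h)).trans (ag2 k hk),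
        (ag1 n2 h).trans f2, t2⟩

theorem pathLt_congr_left {N : ℕ} {a b c : Fin N × (ℕ → Bool)}
    (h1 : a.1 = b.1) (h2 : ∀ n, a.2 n = b.2 n) (h : PathLt a c) : PathLt b c := by
  rcases h with h | ⟨e, n, ag, hf, ht⟩
  · exact Or.inl (h1 ▸ h)
  · exact Or.inr ⟨h1 ▸ e, n, fun k hk => (h2 k).symm.trans (ag k hk), (h2 n).symm.trans hf, ht⟩

theorem path_trichotomy {N : ℕ} (a p : Fin N × (ℕ → Bool)) :
    PathLt a p ∨ PathLt p a ∨ (a.1 = p.1 ∧ ∀ n, a.2 n = p.2 n) := by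
  rcases lt_trichotomy a.1 p.1 with h | h | h
  · exact Or.inl (Or.inl h)
  · by_cases hd : ∀ n, a.2 n = p.2 n
    · exact Or.inr (Or.inr ⟨h, hd⟩)
    · push_neg at hd
      have hex : ∃ n, a.2 n ≠ p.2 n := hd
      classical
      have hne : a.2 (Nat.find hex) ≠ p.2 (Nat.find hex) := Nat.find_spec hex
      have hag : ∀ k < Nat.find hex, a.2 k = p.2 k := fun k hk =>
        not_ne_iff.mp (Nat.find_min hex hk)
      set n := Nat.find hex
      cases ha : a.2 n with
      | false =>
        cases hp : p.2 n with
        | false => rw [ha, hp] at hne; exact absurd rfl hne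
        | true => exact Or.inl (Or.inr ⟨h, n, hag, ha, hp⟩)
      | true =>
        cases hp : p.2 n with
        | false =>
          exact Or.inr (Or.inl (Or.inr ⟨h.symm, n,
            fun k hk => (hag k hk).symm, hp, ha⟩))
        | true => rw [ha, hp] at hne; exact absurd rfl hne
  · exact Or.inr (Or.inl (Or.inl h))

theorem pathLt_chain {N : ℕ} {pk : ℕ → Fin N × (ℕ → Bool)}
    (hinc : ∀ k, PathLt (pk k) (pk (k + 1))) :
    ∀ k j, k < j → PathLt (pk k) (pk j) := by
  intro k j
  induction j with
  | zero => omega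
  | succ j ih =>
    intro hkj
    rcases Nat.lt_succ_iff_lt_or_eq.mp hkj with h | h
    · exact pathLtTrans (ih h) (hinc j)
    · rw [h]; exact hinc j

/-- no term of a strictly increasing sequence converging to `p` lies above `p`. -/
theorem not_p_lt_pk {N : ℕ} {pk : ℕ → Fin N × (ℕ → Bool)} {p : Fin N × (ℕ → Bool)}
    (hinc : ∀ k, PathLt (pk k) (pk (k + 1))) (htend : PathTendsto pk p) (k : ℕ) :
    ¬ PathLt p (pk k) := by
  rintro (h | ⟨heq, n, hag, hf, ht⟩)
  · obtain ⟨K, hK⟩ := htend 0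
    have hj : PathLt (pk k) (pk (max (k+1) K)) := pathLt_chain hinc _ _ (by omega)
    have h1 : (pk (max (k+1) K)).1 = p.1 := (hK _ (le_max_right _ _)).1
    have hle : (pk k).1 ≤ (pk (max (k+1) K)).1 := by
      rcases hj with hj | ⟨hj, -⟩
      · exact hj.le
      · exact hj.le
    rw [h1] at hle
    exact absurd (lt_of_lt_of_le h hle) (lt_irrefl _)
  · obtain ⟨K, hK⟩ := htend n
    set j := max (k+1) K with hjdef
    have hagj : ∀ l ≤ n, (pk j).2 l = p.2 l := (hK j (le_max_right _ _)).2
    have h1j : (pk j).1 = p.1 := (hK j (le_max_right _ _)).1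
    have hj : PathLt (pk k) (pk j) := pathLt_chain hinc _ _ (by omega)
    rcases hj with hj | ⟨hje, n', hag', hf', ht'⟩
    · rw [h1j, ← heq] at hj
      exact absurd hj (lt_irrefl _)
    · rcases lt_trichotomy n' n with hc | hc | hc
      · have e1 : p.2 n' = (pk k).2 n' := hag n' hc
        have e2 : (pk j).2 n' = p.2 n' := hagj n' hc.le
        rw [ht', e1, hf'] at e2
        exact absurd e2 (by simp)
      · subst hc
        rw [ht] at hf'
        exact absurd hf' (by simp)
      · have e1 : (pk k).2 n = (pk j).2 n := hag' n hc
        have e2 : (pk j).2 n = p.2 n := hagj n le_rfl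
        rw [ht, e2, hf] at e1
        exact absurd e1 (by simp)

theorem pk_lt_p {N : ℕ} {pk : ℕ → Fin N × (ℕ → Bool)} {p : Fin N × (ℕ → Bool)}
    (hinc : ∀ k, PathLt (pk k) (pk (k + 1))) (htend : PathTendsto pk p) (k : ℕ) :
    PathLt (pk k) p := by
  rcases path_trichotomy (pk k) p with h | h | ⟨h1, h2⟩
  · exact h
  · exact absurd h (not_p_lt_pk hinc htend k)
  · exfalso
    have : PathLt p (pk (k+1)) := pathLt_congr_left h1 h2 (hinc k)
    exact not_p_lt_pk hinc htend (k+1) this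

theorem pathLt_congr_right {N : ℕ} {a b c : Fin N × (ℕ → Bool)}
    (h1 : a.1 = b.1) (h2 : ∀ n, a.2 n = b.2 n) (h : PathLt c a) : PathLt c b := by
  rcases h with h | ⟨e, n, ag, hf, ht⟩
  · exact Or.inl (h1 ▸ h)
  · exact Or.inr ⟨e.trans h1, n, fun k hk => (ag k hk).trans (h2 k), hf, (h2 n) ▸ ht⟩

theorem pathLt_chain' {N : ℕ} {qk : ℕ → Fin N × (ℕ → Bool)}
    (hdec : ∀ k, PathLt (qk (k + 1)) (qk k)) :
    ∀ k j, k < j → PathLt (qk j) (qk k) := by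
  intro k j
  induction j with
  | zero => omega
  | succ j ih =>
    intro hkj
    rcases Nat.lt_succ_iff_lt_or_eq.mp hkj with h | h
    · exact pathLtTrans (hdec j) (ih h)
    · rw [h]; exact hdec j

theorem not_qk_lt_q {N : ℕ} {qk : ℕ → Fin N × (ℕ → Bool)} {q : Fin N × (ℕ → Bool)}
    (hdec : ∀ k, PathLt (qk (k + 1)) (qk k)) (htend : PathTendsto qk q) (k : ℕ) :
    ¬ PathLt (qk k) q := by
  rintro (h | ⟨heq, n, hag, hf, ht⟩)
  · obtain ⟨K, hK⟩ := htend 0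
    have hj : PathLt (qk (max (k+1) K)) (qk k) := pathLt_chain' hdec _ _ (by omega)
    have h1 : (qk (max (k+1) K)).1 = q.1 := (hK _ (le_max_right _ _)).1
    have hle : (qk (max (k+1) K)).1 ≤ (qk k).1 := by
      rcases hj with hj | ⟨hj, -⟩
      · exact hj.le
      · exact hj.le
    rw [h1] at hle
    exact absurd (lt_of_le_of_lt hle h) (lt_irrefl _)
  · obtain ⟨K, hK⟩ := htend n
    set j := max (k+1) K with hjdef
    have hagj : ∀ l ≤ n, (qk j).2 l = q.2 l := (hK j (le_max_right _ _)).2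
    have h1j : (qk j).1 = q.1 := (hK j (le_max_right _ _)).1
    have hj : PathLt (qk j) (qk k) := pathLt_chain' hdec _ _ (by omega)
    rcases hj with hj | ⟨hje, n', hag', hf', ht'⟩
    · rw [h1j, ← heq] at hj
      exact absurd hj (lt_irrefl _)
    · rcases lt_trichotomy n' n with hc | hc | hc
      · have e1 : (qk k).2 n' = q.2 n' := hag n' hc
        have e2 : (qk j).2 n' = q.2 n' := hagj n' hc.le
        rw [hf', ht'] at *
        rw [ht'] at e1
        rw [hf'] at e2
        rw [← e2] at e1
        exact absurd e1 (by simp)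
      · subst hc
        rw [hf] at ht'
        exact absurd ht' (by simp)
      · have e1 : (qk j).2 n = (qk k).2 n := hag' n hc
        have e2 : (qk j).2 n = q.2 n := hagj n le_rfl
        rw [hf, ht] at *
        rw [hf] at e1
        rw [ht] at e2
        rw [e1] at e2
        exact absurd e2 (by simp)

theorem q_lt_qk {N : ℕ} {qk : ℕ → Fin N × (ℕ → Bool)} {q : Fin N × (ℕ → Bool)}
    (hdec : ∀ k, PathLt (qk (k + 1)) (qk k)) (htend : PathTendsto qk q) (k : ℕ) :
    PathLt q (qk k) := by
  rcases path_trichotomy (qk k) q with h | h | ⟨h1, h2⟩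
  · exact absurd h (not_qk_lt_q hdec htend k)
  · exact h
  · exfalso
    have : PathLt (qk (k+1)) q := pathLt_congr_right h1 h2 (hdec k)
    exact not_qk_lt_q hdec htend (k+1) this

theorem Rp_le_Lp_of_pathLt {N : ℕ} (Φ : Fin N → List Bool → ℝ)
    (hpos : ∀ (i : Fin N) (w : List Bool), 0 < Φ i w)
    {q p : Fin N × (ℕ → Bool)} {m : ℕ}
    (h : EdgeLt (q.1, word q.2 m) (p.1, word p.2 m)) :
    Rp Φ q m ≤ Lp Φ p m :=
  Rs_le_Ls Φ hpos (w := pv q m) (v := pv p m) h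

theorem Xinf_le_SL_of_lt {N : ℕ} (Φ : Fin N → List Bool → ℝ)
    (hpos : ∀ (i : Fin N) (w : List Bool), 0 < Φ i w)
    (hharm : ∀ (i : Fin N) (w : List Bool), Φ i w = Φ i (w ++ [false]) + Φ i (w ++ [true]))
    {q p : Fin N × (ℕ → Bool)} (h : PathLt q p) : Xinf Φ q ≤ SL Φ p := by
  obtain ⟨M, hM⟩ := eventual_edge h
  have h1 : Xinf Φ q ≤ Rp Φ q M := Xinf_le_Rp Φ hpos hharm q M
  have h2 : Rp Φ q M ≤ Lp Φ p M := Rp_le_Lp_of_pathLt Φ hpos (hM M le_rfl)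
  have h3 : Lp Φ p M ≤ SL Φ p := Lp_le_SL Φ hpos hharm p M
  linarith

theorem IR_le_Xinf_of_lt {N : ℕ} (Φ : Fin N → List Bool → ℝ)
    (hpos : ∀ (i : Fin N) (w : List Bool), 0 < Φ i w)
    (hharm : ∀ (i : Fin N) (w : List Bool), Φ i w = Φ i (w ++ [false]) + Φ i (w ++ [true]))
    {q r : Fin N × (ℕ → Bool)} (h : PathLt q r) : IR Φ q ≤ Xinf Φ r := by
  obtain ⟨M, hM⟩ := eventual_edge h
  have h1 : IR Φ q ≤ Rp Φ q M := IR_le_Rp Φ hpos hharm q M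
  have h2 : Rp Φ q M ≤ Lp Φ r M := Rp_le_Lp_of_pathLt Φ hpos (hM M le_rfl)
  have h3 : Lp Φ r M ≤ Xinf Φ r := Lp_le_Xinf Φ hpos hharm r M
  linarith

theorem Lp_agree {N : ℕ} (Φ : Fin N → List Bool → ℝ) {a p : Fin N × (ℕ → Bool)} {m : ℕ}
    (h1 : a.1 = p.1) (h2 : ∀ l ≤ m, a.2 l = p.2 l) :
    Lp Φ a (m+1) = Lp Φ p (m+1) := by
  unfold Lp
  rw [h1, show pv a (m+1) = pv p (m+1) from funext fun k => h2 k.val (by omega)]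

theorem Rp_agree {N : ℕ} (Φ : Fin N → List Bool → ℝ) {a p : Fin N × (ℕ → Bool)} {m : ℕ}
    (h1 : a.1 = p.1) (h2 : ∀ l ≤ m, a.2 l = p.2 l) :
    Rp Φ a (m+1) = Rp Φ p (m+1) := by
  unfold Rp
  rw [Lp_agree Φ h1 h2, h1,
    show word a.2 (m+1) = word p.2 (m+1) from
      congrArg _ (funext fun k : Fin (m+1) => h2 k.val (by omega))]

/-- **One-sided jumps of `X_∞`.** If `p` is the limit of a strictly increasing sequence
of paths, then `X_∞(p) − X^L_∞(p) = Φ_∞(p)/2`; dually, if `q` is the limit of a strictly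
decreasing sequence of paths, then `X^R_∞(q) − X_∞(q) = Φ_∞(q)/2`. -/
theorem Xinfty_one_sided_jumps (N : ℕ) (hN : 1 ≤ N) (Φ : Fin N → List Bool → ℝ)
    (hpos : ∀ (i : Fin N) (w : List Bool), 0 < Φ i w)
    (hharm : ∀ (i : Fin N) (w : List Bool), Φ i w = Φ i (w ++ [false]) + Φ i (w ++ [true])) :
    (∀ (p : Fin N × (ℕ → Bool)) (pk : ℕ → Fin N × (ℕ → Bool)),
      (∀ k, PathLt (pk k) (pk (k + 1))) → PathTendsto pk p →
      Xinf Φ p - XL Φ p = PhiInf Φ p / 2) ∧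
    (∀ (q : Fin N × (ℕ → Bool)) (qk : ℕ → Fin N × (ℕ → Bool)),
      (∀ k, PathLt (qk (k + 1)) (qk k)) → PathTendsto qk q →
      XR Φ q - Xinf Φ q = PhiInf Φ q / 2) := by
  constructor
  · intro p pk hinc htend
    have hXinf := Xinf_eq Φ hpos hharm p
    have hPhi := PhiInf_eq Φ hpos hharm p
    suffices hXL : XL Φ p = SL Φ p by
      rw [hXL, hXinf, hPhi]; ring
    have hub : ∀ x ∈ Xinf Φ '' {q | PathLt q p}, x ≤ SL Φ p := by
      rintro _ ⟨q, hq, rfl⟩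
      exact Xinf_le_SL_of_lt Φ hpos hharm hq
    have hne : (Xinf Φ '' {q | PathLt q p}).Nonempty :=
      ⟨Xinf Φ (pk 0), pk 0, pk_lt_p hinc htend 0, rfl⟩
    refine le_antisymm (csSup_le hne hub) ?_
    show (⨆ m, Lp Φ p m) ≤ sSup (Xinf Φ '' {q | PathLt q p})
    refine ciSup_le fun m => ?_
    obtain ⟨K, hK⟩ := htend m
    have hKK := hK K le_rfl
    have hmem : Xinf Φ (pk K) ∈ Xinf Φ '' {q | PathLt q p} :=
      ⟨pk K, pk_lt_p hinc htend K, rfl⟩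
    have e : Lp Φ (pk K) (m+1) = Lp Φ p (m+1) := Lp_agree Φ hKK.1 hKK.2
    have h1 : Lp Φ p m ≤ Lp Φ p (m+1) := Lp_mono Φ hpos hharm p (by omega)
    have h2 : Lp Φ (pk K) (m+1) ≤ Xinf Φ (pk K) := Lp_le_Xinf Φ hpos hharm (pk K) (m+1)
    have h3 : Xinf Φ (pk K) ≤ sSup (Xinf Φ '' {q | PathLt q p}) :=
      le_csSup ⟨SL Φ p, fun x hx => hub x hx⟩ hmem
    linarith
  · intro q qk hdec htend
    have hXinf := Xinf_eq Φ hpos hharm q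
    have hPhi := PhiInf_eq Φ hpos hharm q
    suffices hXR : XR Φ q = IR Φ q by
      rw [hXR, hXinf, hPhi]; ring
    have hlb : ∀ x ∈ Xinf Φ '' {r | PathLt q r}, IR Φ q ≤ x := by
      rintro _ ⟨r, hr, rfl⟩
      exact IR_le_Xinf_of_lt Φ hpos hharm hr
    have hne : (Xinf Φ '' {r | PathLt q r}).Nonempty :=
      ⟨Xinf Φ (qk 0), qk 0, q_lt_qk hdec htend 0, rfl⟩
    refine le_antisymm ?_ (le_csInf hne hlb)
    show sInf (Xinf Φ '' {r | PathLt q r}) ≤ ⨅ m, Rp Φ q m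
    refine le_ciInf fun m => ?_
    obtain ⟨K, hK⟩ := htend m
    have hKK := hK K le_rfl
    have hmem : Xinf Φ (qk K) ∈ Xinf Φ '' {r | PathLt q r} :=
      ⟨qk K, q_lt_qk hdec htend K, rfl⟩
    have e : Rp Φ (qk K) (m+1) = Rp Φ q (m+1) := Rp_agree Φ hKK.1 hKK.2
    have h1 : Rp Φ q (m+1) ≤ Rp Φ q m := Rp_anti Φ hpos hharm q (by omega)
    have h2 : Xinf Φ (qk K) ≤ Rp Φ (qk K) (m+1) := Xinf_le_Rp Φ hpos hharm (qk K) (m+1)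
    have h3 : sInf (Xinf Φ '' {r | PathLt q r}) ≤ Xinf Φ (qk K) :=
      csInf_le ⟨IR Φ q, fun x hx => hlb x hx⟩ hmem
    linarith
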